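/- Let P be a Markov kernel and V ≥ 1 with P^N V ≤ δ^N V + L·1_X. Then for every β ∈ (0,1], P^N V^β ≤ δ^{Nβ} V^β + L^β·1_X. In particular the drift condition (D) with respect to V implies the drift condition with respect to V^β (with constant δ^β ∈ (0,1)). -/

import Mathlib

open MeasureTheory ProbabilityTheory ENNReal

/-- Iterates `P^n` of a transition kernel. -/
noncomputable def kpow {X : Type*} [MeasurableSpace X] (P : Kernel X X) : ℕ → Kernel X X
  | 0 => Kernel.id
  | n + 1 => P ∘ₖ kpow P n

instance kpow_isMarkov {X : Type*} [MeasurableSpace X] (P : Kernel X X) [IsMarkovKernel P]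
    (n : ℕ) : IsMarkovKernel (kpow P n) := by
  induction n with
  | zero => exact (by infer_instance : IsMarkovKernel (Kernel.id : Kernel X X))
  | succ n ih => exact (by infer_instance : IsMarkovKernel (P ∘ₖ kpow P n))

/-- Jensen's inequality for a concave power on a probability measure. -/
lemma jensen_rpow {X : Type*} [MeasurableSpace X] (μ : Measure X) [IsProbabilityMeasure μ]
    (f : X → ℝ≥0∞) (hf : Measurable f) {β : ℝ} (hβ0 : 0 < β) (hβ1 : β ≤ 1) :
    ∫⁻ x, f x ^ β ∂μ ≤ (∫⁻ x, f x ∂μ) ^ β := by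
  rcases eq_or_lt_of_le hβ1 with h1 | h1
  · subst h1; simp
  · have hpq : (1 / β).HolderConjugate (1 / (1 - β)) := by
      constructor
      · simp
      · positivity
      · have : 0 < 1 - β := by linarith
        positivity
    have h := ENNReal.lintegral_mul_le_Lp_mul_Lq μ hpq
      (hf.pow_const β).aemeasurable aemeasurable_const (g := fun _ => (1 : ℝ≥0∞))
    simp only [mul_one, one_rpow, lintegral_one, measure_univ] at h
    calc ∫⁻ x, f x ^ β ∂μ ≤ (∫⁻ x, (f x ^ β) ^ (1 / β) ∂μ) ^ (1 / (1 / β)) * 1 ^ (1 / (1 / β)) := by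
          simpa [one_div_one_div] using h
      _ = (∫⁻ x, f x ∂μ) ^ β := by
          simp only [one_rpow, mul_one, one_div_one_div]
          congr 1
          refine lintegral_congr fun x => ?_
          rw [← ENNReal.rpow_mul, mul_one_div, div_self hβ0.ne', ENNReal.rpow_one]

/-- the drift condition `P^N V ≤ δ^N V + L 1_X` implies, for every
`β ∈ (0,1]`, the drift condition `P^N V^β ≤ δ^{Nβ} V^β + L^β 1_X` (Jensen's inequality). -/
theorem stmt12 {X : Type*} [MeasurableSpace X] (P : Kernel X X) [IsMarkovKernel P]
    (V : X → ℝ) (hVm : Measurable V) (hV : ∀ x, 1 ≤ V x)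
    (N : ℕ) (hN : 1 ≤ N) (δ L : ℝ) (hδ : δ ∈ Set.Ioo (0 : ℝ) 1) (hL : 0 < L)
    (hdrift : ∀ x, ∫⁻ y, ENNReal.ofReal (V y) ∂(kpow P N x)
      ≤ ENNReal.ofReal (δ ^ N * V x + L)) :
    ∀ β ∈ Set.Ioc (0 : ℝ) 1, ∀ x,
      ∫⁻ y, ENNReal.ofReal (V y ^ β) ∂(kpow P N x)
        ≤ ENNReal.ofReal (δ ^ ((N : ℝ) * β) * V x ^ β + L ^ β) := by
  rintro β ⟨hβ0, hβ1⟩ x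
  have hVx0 : (0:ℝ) ≤ V x := le_trans zero_le_one (hV x)
  have hδN : (0:ℝ) ≤ δ ^ N * V x := mul_nonneg (pow_nonneg hδ.1.le N) hVx0
  have key : ∫⁻ y, ENNReal.ofReal (V y ^ β) ∂(kpow P N x)
      ≤ (ENNReal.ofReal (δ ^ N * V x + L)) ^ β := by
    have h1 : ∫⁻ y, ENNReal.ofReal (V y ^ β) ∂(kpow P N x)
        = ∫⁻ y, (ENNReal.ofReal (V y)) ^ β ∂(kpow P N x) := by
      refine lintegral_congr fun y => ?_
      rw [ENNReal.ofReal_rpow_of_nonneg (le_trans zero_le_one (hV y)) hβ0.le]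
    rw [h1]
    calc ∫⁻ y, (ENNReal.ofReal (V y)) ^ β ∂(kpow P N x)
        ≤ (∫⁻ y, ENNReal.ofReal (V y) ∂(kpow P N x)) ^ β :=
          jensen_rpow _ _ (ENNReal.measurable_ofReal.comp hVm) hβ0 hβ1
      _ ≤ (ENNReal.ofReal (δ ^ N * V x + L)) ^ β :=
          ENNReal.rpow_le_rpow (hdrift x) hβ0.le
  refine key.trans ?_
  rw [ENNReal.ofReal_add hδN hL.le]
  calc (ENNReal.ofReal (δ ^ N * V x) + ENNReal.ofReal L) ^ β
      ≤ ENNReal.ofReal (δ ^ N * V x) ^ β + ENNReal.ofReal L ^ β :=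
        ENNReal.rpow_add_le_add_rpow _ _ hβ0.le hβ1
    _ = ENNReal.ofReal ((δ ^ N * V x) ^ β) + ENNReal.ofReal (L ^ β) := by
        rw [ENNReal.ofReal_rpow_of_nonneg hδN hβ0.le,
          ENNReal.ofReal_rpow_of_nonneg hL.le hβ0.le]
    _ = ENNReal.ofReal (δ ^ ((N : ℝ) * β) * V x ^ β + L ^ β) := by
        rw [← ENNReal.ofReal_add (by positivity) (by positivity)]
        congr 1
        rw [Real.mul_rpow (pow_nonneg hδ.1.le N) hVx0, ← Real.rpow_natCast δ N,
          ← Real.rpow_mul hδ.1.le]
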